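/- Let S be a symmetric numerical semigroup with δ gaps and associated partition λ. Then |λ| = Σ_i λ_i ≤ δ(δ+1)/2, with equality if and only if S = ⟨2, 2δ+1⟩, the numerical semigroup generated by 2 and 2δ+1. -/

import Mathlib

open Finset

private lemma sumAux (δ : ℕ) : (∑ i : Fin δ, (δ - (i : ℕ))) = δ * (δ + 1) / 2 := by
  rw [Fin.sum_univ_eq_sum_range]
  have h1 : ∑ i ∈ range δ, (δ - i) = ∑ i ∈ range δ, (i + 1) := by
    rw [← Finset.sum_range_reflect]
    refine Finset.sum_congr rfl fun i hi => ?_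
    simp only [mem_range] at hi
    omega
  have h3 : ∑ i ∈ range (δ + 1), (id i) = ∑ i ∈ range δ, (id (i + 1)) + id 0 :=
    Finset.sum_range_succ' id δ
  simp only [id] at h3
  have h2 := Finset.sum_range_id_mul_two (δ + 1)
  have h4 : (δ + 1) * ((δ + 1) - 1) = δ * (δ + 1) := by
    rw [Nat.add_sub_cancel, Nat.mul_comm]
  set N := δ * (δ + 1) with hN
  have h5 : (∑ i ∈ range δ, (δ - i)) * 2 = N := by
    rw [h1, ← Nat.add_zero (∑ i ∈ range δ, (i + 1)), ← h3, h2, h4]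
  omega

private lemma compl_target (δ : ℕ) :
    {m : ℕ | ∃ a b : ℕ, m = 2 * a + (2 * δ + 1) * b}ᶜ
      = {n : ℕ | n % 2 = 1 ∧ n < 2 * δ} := by
  ext n
  simp only [Set.mem_compl_iff, Set.mem_setOf_eq, not_exists]
  constructor
  · intro h
    constructor
    · by_contra hpar
      exact h (n / 2) 0 (by omega)
    · by_contra hge
      push_neg at hge
      by_cases hpar : n % 2 = 1
      · exact h ((n - (2 * δ + 1)) / 2) 1 (by omega)
      · exact h (n / 2) 0 (by omega)
  · rintro ⟨h1, h2⟩ a b heq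
    rcases b with _ | k
    · omega
    · have hb : 2 * δ + 1 ≤ (2 * δ + 1) * (k + 1) :=
        Nat.le_mul_of_pos_right _ (Nat.succ_pos k)
      linarith

private lemma range_v (δ : ℕ) :
    Set.range (fun j : Fin δ => 2 * (j : ℕ) + 1) = {n : ℕ | n % 2 = 1 ∧ n < 2 * δ} := by
  ext n
  simp only [Set.mem_range, Set.mem_setOf_eq]
  constructor
  · rintro ⟨j, rfl⟩
    have := j.isLt
    omega
  · rintro ⟨h1, h2⟩
    exact ⟨⟨n / 2, by omega⟩, by show 2 * (n / 2) + 1 = n; omega⟩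

private lemma v_mono (δ : ℕ) : StrictMono (fun j : Fin δ => 2 * (j : ℕ) + 1) := by
  intro a b hab
  simp only [Fin.lt_def] at hab
  show 2 * (a : ℕ) + 1 < 2 * (b : ℕ) + 1
  omega

/-- The `j`-th gap of a numerical semigroup is at most `2j+1` (0-indexed). -/
private lemma gapBound (S : Set ℕ) (h0 : 0 ∈ S)
    (hadd : ∀ a ∈ S, ∀ b ∈ S, a + b ∈ S)
    (hfin : Sᶜ.Finite) (δ : ℕ)
    (w : Fin δ → ℕ) (hmono : StrictMono w) (hrange : Set.range w = Sᶜ)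
    (j : Fin δ) : w j ≤ 2 * (j : ℕ) + 1 := by
  classical
  set n := w j with hn
  set G := hfin.toFinset with hGdef
  have hmemG : ∀ x : ℕ, x ∈ G ↔ x ∉ S := fun x => hfin.mem_toFinset
  have hwG : ∀ i : Fin δ, w i ∈ G := by
    intro i
    rw [hmemG]
    have : w i ∈ Sᶜ := hrange ▸ Set.mem_range_self i
    exact this
  have hnS : n ∉ S := (hmemG n).1 (hwG j)
  set T := G.filter (fun x => x ≤ n) with hT
  have hTcard : T.card = (j : ℕ) + 1 := by
    have him : T = Finset.image w (Finset.univ.filter (fun i : Fin δ => i ≤ j)) := by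
      ext x
      simp only [hT, Finset.mem_filter, Finset.mem_image, Finset.mem_univ, true_and]
      constructor
      · rintro ⟨hxG, hxn⟩
        have hx : x ∈ Set.range w := by
          rw [hrange]
          exact (hmemG x).1 hxG
        obtain ⟨i, rfl⟩ := hx
        exact ⟨i, hmono.le_iff_le.1 hxn, rfl⟩
      · rintro ⟨i, hi, rfl⟩
        exact ⟨hwG i, hmono.monotone hi⟩
    have hfil : Finset.univ.filter (fun i : Fin δ => i ≤ j) = Finset.Iic j := by
      ext i
      simp [Finset.mem_Iic]
    rw [him, Finset.card_image_of_injective _ hmono.injective, hfil, Fin.card_Iic]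
  set m := n / 2 with hm
  have hcard : m + 1 ≤ T.card := by
    have := Finset.card_le_card_of_injOn (fun a => if a ∈ S then n - a else a)
      (s := Finset.range (m + 1)) (t := T) ?_ ?_
    · simpa using this
    · intro a ha
      simp only [Finset.coe_range, Set.mem_Iio] at ha
      have han : a ≤ n := by omega
      by_cases haS : a ∈ S
      · simp only [if_pos haS, hT, Finset.mem_coe, Finset.mem_filter]
        refine ⟨(hmemG _).2 fun hcontra => hnS ?_, by omega⟩
        have := hadd a haS _ hcontra
        rwa [Nat.add_sub_cancel' han] at this
      · simp only [if_neg haS, hT, Finset.mem_coe, Finset.mem_filter]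
        exact ⟨(hmemG _).2 haS, han⟩
    · intro a ha b hb hab
      simp only [Finset.coe_range, Set.mem_Iio] at ha hb
      by_cases haS : a ∈ S <;> by_cases hbS : b ∈ S <;>
        simp only [if_pos, if_neg, haS, hbS, if_true, if_false] at hab
      · omega
      · have hne : a ≠ b := fun h => hbS (h ▸ haS)
        omega
      · have hne : a ≠ b := fun h => haS (h ▸ hbS)
        omega
      · exact hab
  omega

theorem stmt_4 (S : Set ℕ) (h0 : 0 ∈ S)
    (hadd : ∀ a ∈ S, ∀ b ∈ S, a + b ∈ S)
    (hfin : Sᶜ.Finite) (δ : ℕ) (hδ : δ = hfin.toFinset.card)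
    (hsym : ∀ w : ℕ, (w ∉ S ↔ (2 * (δ : ℤ) - 1 - w) ∈ ((fun k : ℕ => (k : ℤ)) '' S)))
    (w : Fin δ → ℕ) (hmono : StrictMono w) (hrange : Set.range w = Sᶜ)
    (lam : Fin δ → ℕ)
    (hlam : ∀ i : Fin δ, lam i = w i.rev - ((δ - 1) - (i : ℕ))) :
    (∑ i : Fin δ, lam i) ≤ δ * (δ + 1) / 2 ∧
      ((∑ i : Fin δ, lam i) = δ * (δ + 1) / 2 ↔
        S = {m : ℕ | ∃ a b : ℕ, m = 2 * a + (2 * δ + 1) * b}) := by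
  have hgap : ∀ j : Fin δ, w j ≤ 2 * (j : ℕ) + 1 :=
    gapBound S h0 hadd hfin δ w hmono hrange
  have hge' : ∀ v : ℕ, ∀ h : v < δ, v ≤ w ⟨v, h⟩ := by
    intro v
    induction v with
    | zero => exact fun h => Nat.zero_le _
    | succ k ih =>
      intro h
      have hk : k < δ := by omega
      have h1 := ih hk
      have h2 : w ⟨k, hk⟩ < w ⟨k + 1, h⟩ := hmono (by simp [Fin.lt_def])
      omega
  have hge : ∀ j : Fin δ, (j : ℕ) ≤ w j := fun j => by
    have := hge' j.1 j.2
    simpa using this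
  -- termwise bound : lam i ≤ δ - i
  have hbound : ∀ i : Fin δ, lam i ≤ δ - (i : ℕ) := by
    intro i
    rw [hlam i]
    have h1 := hgap i.rev
    have h2 : (i.rev : ℕ) = δ - ((i : ℕ) + 1) := Fin.val_rev i
    have := i.isLt
    omega
  have hsumle : (∑ i : Fin δ, lam i) ≤ ∑ i : Fin δ, (δ - (i : ℕ)) :=
    Finset.sum_le_sum fun i _ => hbound i
  have hsA := sumAux δ
  refine ⟨hsA ▸ hsumle, ?_, ?_⟩
  · -- equality → S = ⟨2, 2δ+1⟩
    intro hsum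
    have heach : ∀ i ∈ Finset.univ, lam i = δ - (i : ℕ) :=
      (Finset.sum_eq_sum_iff_of_le fun i _ => hbound i).1 (by rw [hsum, hsA])
    have hwv : ∀ j : Fin δ, w j = 2 * (j : ℕ) + 1 := by
      intro j
      have h1 := heach j.rev (Finset.mem_univ _)
      rw [hlam j.rev, Fin.rev_rev] at h1
      have h2 : (j.rev : ℕ) = δ - ((j : ℕ) + 1) := Fin.val_rev j
      have h3 := hge j
      have := j.isLt
      omega
    have hrw : Set.range w = Set.range (fun j : Fin δ => 2 * (j : ℕ) + 1) := by
      have : w = fun j : Fin δ => 2 * (j : ℕ) + 1 := funext hwv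
      rw [this]
    have hcompl : Sᶜ = {n : ℕ | n % 2 = 1 ∧ n < 2 * δ} := by
      rw [← hrange, hrw, range_v]
    have : Sᶜ = {m : ℕ | ∃ a b : ℕ, m = 2 * a + (2 * δ + 1) * b}ᶜ := by
      rw [hcompl, compl_target]
    exact compl_injective this
  · -- S = ⟨2, 2δ+1⟩ → equality
    intro hS
    have hcompl : Sᶜ = {n : ℕ | n % 2 = 1 ∧ n < 2 * δ} := by
      rw [hS, compl_target]
    have hr : Set.range w = Set.range (fun j : Fin δ => 2 * (j : ℕ) + 1) := by
      rw [hrange, hcompl, range_v]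
    haveI : WellFoundedLT (Fin δ) := inferInstance
    have hwv : w = fun j : Fin δ => 2 * (j : ℕ) + 1 :=
      (hmono.range_inj (v_mono δ)).1 hr
    have hlameq : ∀ i : Fin δ, lam i = δ - (i : ℕ) := by
      intro i
      rw [hlam i, hwv]
      show 2 * (i.rev : ℕ) + 1 - ((δ - 1) - (i : ℕ)) = δ - (i : ℕ)
      have h2 : (i.rev : ℕ) = δ - ((i : ℕ) + 1) := Fin.val_rev i
      have := i.isLt
      omega
    rw [Finset.sum_congr rfl fun i _ => hlameq i, hsA]
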